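/- Let n ≥ 1 be an integer, α, β real numbers, and let f : ℝ → ℝ be defined by f(x) = P_n^{(α,β)}(2x²-1). Then for every real x ≠ 0, f''(x) + ((2β+1)/x) f'(x) = 4(n+α+β+1)(n+β) · P_{n-1}^{(α+2,β)}(2x²-1). -/

import Mathlib

open MeasureTheory Finset

/-- Rising factorial (Pochhammer symbol) `(a)_k = a(a+1)⋯(a+k-1)`. -/
noncomputable def poch (a : ℝ) (k : ℕ) : ℝ := ∏ i ∈ Finset.range k, (a + i)

/-- Jacobi polynomial
`P_n^{(α,β)}(x) = Σ_{k=0}^n ((α+k+1)_{n-k}/(n-k)!) ((n+α+β+1)_k/k!) ((x-1)/2)^k`. -/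
noncomputable def jacobiP (n : ℕ) (α β : ℝ) (x : ℝ) : ℝ :=
  ∑ k ∈ Finset.range (n + 1),
    poch (α + k + 1) (n - k) / ((n - k).factorial : ℝ) *
      (poch ((n : ℝ) + α + β + 1) k / (k.factorial : ℝ)) * ((x - 1) / 2) ^ k

lemma poch_succ (a : ℝ) (m : ℕ) : poch a (m+1) = poch a m * (a + m) := by
  simp [poch, Finset.prod_range_succ]

lemma poch_succ' (a : ℝ) (m : ℕ) : poch a (m+1) = a * poch (a+1) m := by
  rw [poch, Finset.prod_range_succ', mul_comm]
  simp only [Nat.cast_zero, add_zero]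
  congr 1
  refine Finset.prod_congr rfl fun i _ => by push_cast; ring

noncomputable def jc (n : ℕ) (α β : ℝ) (k : ℕ) : ℝ :=
  poch (α + k + 1) (n - k) / ((n - k).factorial : ℝ) *
    (poch ((n : ℝ) + α + β + 1) k / (k.factorial : ℝ))

lemma coeff_main (α β : ℝ) (n j : ℕ) (h : j + 2 ≤ n) :
    4*((j:ℝ)+1)*((j:ℝ)+β+1) * jc n α β (j+1) + 4*((j:ℝ)+2)*((j:ℝ)+1) * jc n α β (j+2)
      = 4*((n:ℝ)+α+β+1)*((n:ℝ)+β) * jc (n-1) (α+2) β j := by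
  obtain ⟨m, rfl⟩ : ∃ m, n = j+m+2 := ⟨n-j-2, by omega⟩
  rw [show j+m+2-1 = j+m+1 by omega]
  unfold jc
  have e1 : j+m+2-(j+1) = m+1 := by omega
  have e2 : j+m+2-(j+2) = m := by omega
  have e3 : j+m+1-j = m+1 := by omega
  rw [e1, e2, e3]
  rw [show (α + ((j:ℕ)+1 : ℕ) + 1 : ℝ) = α + (j:ℝ) + 2 by push_cast; ring]
  rw [show (α + ((j:ℕ)+2 : ℕ) + 1 : ℝ) = (α + (j:ℝ) + 2) + 1 by push_cast; ring]
  rw [show ((α+2) + (j:ℕ) + 1 : ℝ) = (α + (j:ℝ) + 2) + 1 by push_cast; ring]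
  rw [show (((j+m+2 : ℕ) : ℝ) + α + β + 1) = ((j:ℝ)+m+α+β+3) by push_cast; ring]
  rw [show (((j+m+1 : ℕ) : ℝ) + (α+2) + β + 1) = ((j:ℝ)+m+α+β+3)+1 by push_cast; ring]
  rw [show (j:ℕ)+2 = (j+1)+1 from rfl]
  rw [poch_succ' (α + (j:ℝ) + 2) m, poch_succ (α + (j:ℝ) + 2 + 1) m,
      poch_succ' ((j:ℝ)+m+α+β+3) (j+1), poch_succ' ((j:ℝ)+m+α+β+3) j,
      poch_succ (((j:ℝ)+m+α+β+3)+1) j]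
  rw [Nat.factorial_succ (m), Nat.factorial_succ (j+1), Nat.factorial_succ j]
  push_cast
  have hm : (m.factorial : ℝ) ≠ 0 := Nat.cast_ne_zero.mpr m.factorial_ne_zero
  have hj : (j.factorial : ℝ) ≠ 0 := Nat.cast_ne_zero.mpr j.factorial_ne_zero
  have hm1 : ((m:ℝ)+1) ≠ 0 := by positivity
  have hj1 : ((j:ℝ)+1) ≠ 0 := by positivity
  have hj2 : ((j:ℝ)+2) ≠ 0 := by positivity
  field_simp
  ring

lemma coeff_edge (α β : ℝ) (n : ℕ) (h : 1 ≤ n) :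
    4*(n:ℝ)*((n:ℝ)+β) * jc n α β n
      = 4*((n:ℝ)+α+β+1)*((n:ℝ)+β) * jc (n-1) (α+2) β (n-1) := by
  obtain ⟨m, rfl⟩ : ∃ m, n = m+1 := ⟨n-1, by omega⟩
  rw [show m+1-1 = m by omega]
  unfold jc
  simp only [Nat.sub_self, Nat.factorial_zero, Nat.cast_one]
  rw [show poch (α + ((m:ℕ)+1 : ℕ) + 1 : ℝ) 0 = 1 by simp [poch]]
  rw [show poch ((α+2) + (m:ℕ) + 1 : ℝ) 0 = 1 by simp [poch]]
  rw [show (((m+1 : ℕ) : ℝ) + α + β + 1) = ((m:ℝ)+α+β+2) by push_cast; ring]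
  rw [show (((m : ℕ) : ℝ) + (α+2) + β + 1) = ((m:ℝ)+α+β+2)+1 by push_cast; ring]
  rw [poch_succ' ((m:ℝ)+α+β+2) m, Nat.factorial_succ m]
  push_cast
  have hm : (m.factorial : ℝ) ≠ 0 := Nat.cast_ne_zero.mpr m.factorial_ne_zero
  have hm1 : ((m:ℝ)+1) ≠ 0 := by positivity
  field_simp

lemma jacobiP_eq (n : ℕ) (α β x : ℝ) :
    jacobiP n α β (2*x^2-1) = ∑ k ∈ Finset.range (n+1), jc n α β k * (x^2-1)^k := by
  unfold jacobiP jc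
  refine Finset.sum_congr rfl fun k _ => ?_
  rw [show (2*x^2-1-1)/2 = x^2-1 by ring]

lemma hasDerivAt_sq (y : ℝ) : HasDerivAt (fun y : ℝ => y^2 - 1) (2*y) y := by
  simpa using ((hasDerivAt_pow 2 y).sub_const 1)

lemma hd1 (n : ℕ) (α β : ℝ) (y : ℝ) :
    HasDerivAt (fun y : ℝ => ∑ k ∈ Finset.range (n+1), jc n α β k * (y^2-1)^k)
      (∑ k ∈ Finset.range (n+1), jc n α β k * ((k : ℝ) * (y^2-1)^(k-1) * (2*y))) y :=
  HasDerivAt.fun_sum fun k _ => ((hasDerivAt_sq y).pow k).const_mul _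

lemma hd2 (n : ℕ) (α β : ℝ) (y : ℝ) :
    HasDerivAt (fun y : ℝ => ∑ k ∈ Finset.range (n+1), jc n α β k * ((k : ℝ) * (y^2-1)^(k-1) * (2*y)))
      (∑ k ∈ Finset.range (n+1), jc n α β k * ((k : ℝ) *
        ((((k-1 : ℕ) : ℝ) * (y^2-1)^(k-2) * (2*y)) * (2*y) + (y^2-1)^(k-1) * 2))) y := by
  apply HasDerivAt.fun_sum
  intro k _
  have h1 : HasDerivAt (fun y : ℝ => (y^2-1)^(k-1))
      (((k-1 : ℕ) : ℝ) * (y^2-1)^(k-1-1) * (2*y)) y := (hasDerivAt_sq y).pow (k-1)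
  have h2 : HasDerivAt (fun y : ℝ => 2*y) 2 y := by
    simpa using (hasDerivAt_id y).const_mul (2:ℝ)
  have h3 := (h1.mul h2).const_mul (jc n α β k * (k : ℝ))
  have he : (fun y : ℝ => jc n α β k * ((k : ℝ) * (y^2-1)^(k-1) * (2*y)))
      = (fun y : ℝ => jc n α β k * (k : ℝ) * ((y^2-1)^(k-1) * (2*y))) := by
    funext y; ring
  rw [he]
  refine h3.congr_deriv ?_
  rw [show k-1-1 = k-2 by omega]; ring

theorem jacobi_dunkl_squared (n : ℕ) (hn : 1 ≤ n) (α β : ℝ)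
    (f : ℝ → ℝ) (hf : ∀ x, f x = jacobiP n α β (2 * x ^ 2 - 1)) (x : ℝ) (hx : x ≠ 0) :
    deriv (deriv f) x + (2 * β + 1) / x * deriv f x =
      4 * ((n : ℝ) + α + β + 1) * ((n : ℝ) + β) *
        jacobiP (n - 1) (α + 2) β (2 * x ^ 2 - 1) := by
  obtain ⟨m, rfl⟩ : ∃ m, n = m+1 := ⟨n-1, by omega⟩
  set N := m+1 with hN
  have hfun : f = fun y => ∑ k ∈ Finset.range (N+1), jc N α β k * (y^2-1)^k :=
    funext fun y => by rw [hf y, jacobiP_eq]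
  have hdf : deriv f = fun y => ∑ k ∈ Finset.range (N+1),
      jc N α β k * ((k : ℝ) * (y^2-1)^(k-1) * (2*y)) := by
    funext y; rw [hfun]; exact (hd1 N α β y).deriv
  have hddf : deriv (deriv f) x = ∑ k ∈ Finset.range (N+1), jc N α β k * ((k : ℝ) *
      ((((k-1 : ℕ) : ℝ) * (x^2-1)^(k-2) * (2*x)) * (2*x) + (x^2-1)^(k-1) * 2)) := by
    rw [hdf]; exact (hd2 N α β x).deriv
  rw [hddf, hdf]
  rw [show (N : ℕ) - 1 = m by omega]
  rw [jacobiP_eq m (α+2) β x]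
  set s := x^2 - 1 with hs
  set c : ℕ → ℝ := jc N α β with hc
  set d : ℕ → ℝ := jc m (α+2) β with hd
  -- combine LHS into a single sum and simplify termwise
  rw [Finset.mul_sum, ← Finset.sum_add_distrib]
  have key : ∀ k ∈ Finset.range (N+1),
      c k * ((k : ℝ) * ((((k-1 : ℕ) : ℝ) * s^(k-2) * (2*x)) * (2*x) + s^(k-1) * 2))
        + (2*β+1)/x * (c k * ((k : ℝ) * s^(k-1) * (2*x)))
      = c k * (4*(k:ℝ)*((k-1 : ℕ) : ℝ)) * s^(k-1)
        + c k * (4*(k:ℝ)*((k-1 : ℕ) : ℝ)) * s^(k-2)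
        + c k * ((4*β+4)*(k:ℝ)) * s^(k-1) := by
    intro k _
    have hxx : (2*β+1)/x * (c k * ((k : ℝ) * s^(k-1) * (2*x)))
        = c k * (2*(2*β+1)*(k:ℝ)) * s^(k-1) := by
      field_simp
    rw [hxx]
    match k with
    | 0 => simp
    | 1 => simp; ring
    | (k+2) =>
      have h1 : (k+2) - 1 = k+1 := rfl
      have h2 : (k+2) - 2 = k := rfl
      rw [h1, h2]
      have hx2 : x^2 = s + 1 := by rw [hs]; ring
      push_cast
      linear_combination (4 * c (k+2) * ((k:ℝ)+2) * ((k:ℝ)+1) * s^k) * hx2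
  rw [Finset.sum_congr rfl key]
  rw [Finset.mul_sum]
  rw [Finset.sum_add_distrib, Finset.sum_add_distrib]
  have hA : ∑ k ∈ Finset.range (N+1), c k * (4*(k:ℝ)*((k-1:ℕ):ℝ)) * s^(k-1)
      = ∑ j ∈ Finset.range (m+1), c (j+1) * (4*((j:ℝ)+1)*(j:ℝ)) * s^j := by
    rw [Finset.sum_range_succ', hN]
    simp only [Nat.add_sub_cancel, Nat.cast_zero, Nat.cast_add, Nat.cast_one, mul_zero,
      zero_mul, add_zero]
  have hC : ∑ k ∈ Finset.range (N+1), c k * ((4*β+4)*(k:ℝ)) * s^(k-1)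
      = ∑ j ∈ Finset.range (m+1), c (j+1) * ((4*β+4)*((j:ℝ)+1)) * s^j := by
    rw [Finset.sum_range_succ', hN]
    simp only [Nat.add_sub_cancel, Nat.cast_zero, Nat.cast_add, Nat.cast_one, mul_zero,
      zero_mul, add_zero]
  have hB : ∑ k ∈ Finset.range (N+1), c k * (4*(k:ℝ)*((k-1:ℕ):ℝ)) * s^(k-2)
      = ∑ i ∈ Finset.range m, c (i+2) * (4*((i:ℝ)+2)*((i:ℝ)+1)) * s^i := by
    rw [Finset.sum_range_succ', hN, Finset.sum_range_succ']
    have t0 : c 0 * (4*((0:ℕ):ℝ)*(((0:ℕ)-1:ℕ):ℝ)) * s^((0:ℕ)-2) = 0 := by norm_num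
    have t1 : c (0+1) * (4*(((0:ℕ)+1:ℕ):ℝ)*(((0:ℕ)+1-1:ℕ):ℝ)) * s^((0:ℕ)+1-2) = 0 := by
      norm_num
    rw [t0, t1, add_zero, add_zero]
    refine Finset.sum_congr rfl fun i _ => ?_
    rw [show i+1+1-1 = i+1 by omega, show i+1+1-2 = i by omega]
    push_cast
    ring
  rw [hA, hB, hC]
  rw [Finset.sum_range_succ (fun j => c (j+1) * (4*((j:ℝ)+1)*(j:ℝ)) * s^j) m,
      Finset.sum_range_succ (fun j => c (j+1) * ((4*β+4)*((j:ℝ)+1)) * s^j) m,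
      Finset.sum_range_succ (fun j => 4*((N:ℝ)+α+β+1)*((N:ℝ)+β) * (d j * s^j)) m]
  have hsum : ∑ j ∈ Finset.range m, c (j+1) * (4*((j:ℝ)+1)*(j:ℝ)) * s^j
      + ∑ i ∈ Finset.range m, c (i+2) * (4*((i:ℝ)+2)*((i:ℝ)+1)) * s^i
      + ∑ j ∈ Finset.range m, c (j+1) * ((4*β+4)*((j:ℝ)+1)) * s^j
      = ∑ j ∈ Finset.range m, 4*((N:ℝ)+α+β+1)*((N:ℝ)+β) * (d j * s^j) := by
    rw [← Finset.sum_add_distrib, ← Finset.sum_add_distrib]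
    refine Finset.sum_congr rfl fun j hj => ?_
    have hj' : j + 2 ≤ m + 1 := by
      have := Finset.mem_range.mp hj; omega
    have hcm := coeff_main α β (m+1) j hj'
    rw [show m+1-1 = m by omega] at hcm
    rw [hc, hd, hN]
    calc jc (m+1) α β (j+1) * (4*((j:ℝ)+1)*(j:ℝ)) * s^j
          + jc (m+1) α β (j+2) * (4*((j:ℝ)+2)*((j:ℝ)+1)) * s^j
          + jc (m+1) α β (j+1) * ((4*β+4)*((j:ℝ)+1)) * s^j
        = (4*((j:ℝ)+1)*((j:ℝ)+β+1) * jc (m+1) α β (j+1)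
            + 4*((j:ℝ)+2)*((j:ℝ)+1) * jc (m+1) α β (j+2)) * s^j := by ring
      _ = 4*(((m+1:ℕ):ℝ)+α+β+1)*(((m+1:ℕ):ℝ)+β) * (jc m (α+2) β j * s^j) := by
          rw [hcm]; ring
  have hedge : c (m+1) * (4*((m:ℝ)+1)*(m:ℝ)) * s^m
      + c (m+1) * ((4*β+4)*((m:ℝ)+1)) * s^m
      = 4*((N:ℝ)+α+β+1)*((N:ℝ)+β) * (d m * s^m) := by
    have hce := coeff_edge α β (m+1) (by omega)
    rw [show m+1-1 = m by omega] at hce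
    rw [hc, hd, hN]
    calc jc (m+1) α β (m+1) * (4*((m:ℝ)+1)*(m:ℝ)) * s^m
          + jc (m+1) α β (m+1) * ((4*β+4)*((m:ℝ)+1)) * s^m
        = (4*((m+1:ℕ):ℝ)*(((m+1:ℕ):ℝ)+β) * jc (m+1) α β (m+1)) * s^m := by
          push_cast; ring
      _ = 4*(((m+1:ℕ):ℝ)+α+β+1)*(((m+1:ℕ):ℝ)+β) * (jc m (α+2) β m * s^m) := by
          rw [hce]; ring
  push_cast at hsum hedge ⊢
  linarith [hsum, hedge]
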